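/- For |t| < ‖V‖^{-1}, the Lie-Schwinger series Σ_{l≥0} (t^l/l!) {H_Λ, A}^{(l)} converges absolutely in the sup-norm on Ξ_Λ for any polynomial observable A = M^β, and its sum equals A ∘ φ^t_Λ, the composition of A with the Hamiltonian flow at time t. -/

import Mathlib

open scoped BigOperators

/-- The index set `I = {+, z, -}` of complex spin coordinates. -/
inductive Idx : Type
  | plus | z | minus
deriving DecidableEq

instance : Fintype Idx :=
  ⟨{Idx.plus, Idx.z, Idx.minus}, fun i => by cases i <;> simp⟩

/-- The symbol `ε̃_{ijk}`: `ε̃_{+−z} = 1`, `ε̃_{−+z} = −1`, `ε̃_{+z+} = −1`,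
`ε̃_{−z−} = 1`, `ε̃_{z++} = 1`, `ε̃_{z−−} = −1`, and `ε̃_{ijk} = 0` otherwise. -/
def eps : Idx → Idx → Idx → ℂ
  | .plus, .minus, .z => 1
  | .minus, .plus, .z => -1
  | .plus, .z, .plus => -1
  | .minus, .z, .minus => 1
  | .z, .plus, .plus => 1
  | .z, .minus, .minus => -1
  | _, _, _ => 0

/-- Conjugation `+ ↦ −`, `z ↦ z`, `− ↦ +` on the index set. -/
def Idx.bar : Idx → Idx
  | .plus => .minus
  | .z => .z
  | .minus => .plus

/-- The complex coordinates `(M_+, M_z, M_-)` of a vector `M ∈ ℝ³`: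
`M_± = (M_1 ± i M_2)/√2`, `M_z = M_3`. -/
noncomputable def coord : Idx → (Fin 3 → ℝ) → ℂ
  | .plus => fun v => ((v 0 : ℂ) + Complex.I * (v 1 : ℂ)) / (Real.sqrt 2 : ℂ)
  | .z => fun v => (v 2 : ℂ)
  | .minus => fun v => ((v 0 : ℂ) - Complex.I * (v 1 : ℂ)) / (Real.sqrt 2 : ℂ)

variable {Λ : Type*}

/-- Membership in the phase space `Ξ_Λ = Π_{x∈Λ} B̄₁(0)`. -/
def inBall (M : Λ → Fin 3 → ℝ) : Prop :=
  ∀ x, (M x 0) ^ 2 + (M x 1) ^ 2 + (M x 2) ^ 2 ≤ 1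

/-- The monomial `M^α`. -/
noncomputable def monom (α : (Idx × Λ) →₀ ℕ) : MvPolynomial (Idx × Λ) ℂ :=
  MvPolynomial.monomial α 1

/-- Evaluation of a polynomial observable at a spin configuration `M`. -/
noncomputable def evalAt (M : Λ → Fin 3 → ℝ) (F : MvPolynomial (Idx × Λ) ℂ) : ℂ :=
  MvPolynomial.eval (fun p => coord p.1 (M p.2)) F

/-- Evaluation of the monomial `M^γ` at a (possibly infinite-volume) spin
configuration `M`. -/
noncomputable def evalMonom (M : Λ → Fin 3 → ℝ) (γ : (Idx × Λ) →₀ ℕ) : ℂ :=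
  γ.prod fun p m => (coord p.1 (M p.2)) ^ m

/-- The degree `|α|` of a multi-index. -/
def deg (α : (Idx × Λ) →₀ ℕ) : ℕ := α.sum fun _ m => m

/-- `|α(x)| = Σ_{i∈I} α_i(x)`. -/
def wt (α : (Idx × Λ) →₀ ℕ) (x : Λ) : ℕ := ∑ i : Idx, α (i, x)

/-- The conjugate multi-index `ᾱ`, with `ᾱ_i(x) = α_{ī}(x)`. -/
def barMulti [DecidableEq Λ] (α : (Idx × Λ) →₀ ℕ) : (Idx × Λ) →₀ ℕ :=
  α.equivMapDomain
    (Equiv.prodCongr ⟨Idx.bar, Idx.bar, fun i => by cases i <;> rfl,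
      fun i => by cases i <;> rfl⟩ (Equiv.refl Λ))

/-- `Σ_{|α| = n} |α(x)| |V(α)|`. -/
noncomputable def VnormPart (V : ((Idx × Λ) →₀ ℕ) → ℂ) (n : ℕ) (x : Λ) : ℝ :=
  ∑' α : {α : (Idx × Λ) →₀ ℕ // deg α = n}, (wt α.1 x : ℝ) * ‖V α.1‖

/-- The norm `‖V‖ = Σ_n sup_x Σ_{|α|=n} |α(x)| |V(α)| e^n` of an interaction
potential. -/
noncomputable def Vnorm [Nonempty Λ] (V : ((Idx × Λ) →₀ ℕ) → ℂ) : ℝ :=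
  ∑' n : ℕ, (⨆ x : Λ, VnormPart V n x) * Real.exp n

section Bracket

variable [Fintype Λ] [DecidableEq Λ]

/-- The Poisson bracket on the polynomial algebra `P_Λ`, the unique biderivation
with `{M_i(x), M_j(y)} = i ε̃_{ijk} δ(x,y) M_k(x)`. -/
noncomputable def pb (F G : MvPolynomial (Idx × Λ) ℂ) : MvPolynomial (Idx × Λ) ℂ :=
  ∑ x : Λ, ∑ i : Idx, ∑ j : Idx, ∑ k : Idx,
    MvPolynomial.C (Complex.I * eps i j k) *
      (MvPolynomial.pderiv (i, x) F) * (MvPolynomial.pderiv (j, x) G) *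
        MvPolynomial.X (k, x)

/-- The iterated Poisson bracket `{H, A}^{(l)}`. -/
noncomputable def pbIter (H : MvPolynomial (Idx × Λ) ℂ) :
    ℕ → MvPolynomial (Idx × Λ) ℂ → MvPolynomial (Idx × Λ) ℂ
  | 0, A => A
  | l + 1, A => pb H (pbIter H l A)

/-- The sup-norm `‖A‖_∞ = sup_{M ∈ Ξ_Λ} |A(M)|` of a polynomial observable. -/
noncomputable def supNorm (F : MvPolynomial (Idx × Λ) ℂ) : ℝ :=
  ⨆ M : {M : Λ → Fin 3 → ℝ // inBall M}, ‖evalAt M.1 F‖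

/-- The classical Hamilton function `H_Λ = Σ_α V(α) M^α` of a finitely supported
interaction potential. -/
noncomputable def Hcl (V : ((Idx × Λ) →₀ ℕ) →₀ ℂ) : MvPolynomial (Idx × Λ) ℂ :=
  ∑ α ∈ V.support, MvPolynomial.C (V α) * monom α

end Bracket

set_option linter.unusedSectionVars false

section AuxAlg

open MvPolynomial

variable {Λ : Type} [Fintype Λ] [DecidableEq Λ]

lemma sum_idx {M : Type*} [AddCommMonoid M] (f : Idx → M) :
    ∑ i : Idx, f i = f .plus + f .z + f .minus := by
  have : (Finset.univ : Finset Idx) = {.plus, .z, .minus} := by decide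
  rw [this]
  simp [Finset.sum_insert, Finset.mem_insert]
  exact (add_assoc _ _ _).symm

lemma pb_add_right (H F G : MvPolynomial (Idx × Λ) ℂ) :
    pb H (F + G) = pb H F + pb H G := by
  simp only [pb, map_add, mul_add, add_mul, Finset.sum_add_distrib]

lemma pb_add_left (H F G : MvPolynomial (Idx × Λ) ℂ) :
    pb (F + G) H = pb F H + pb G H := by
  simp only [pb, map_add, mul_add, add_mul, Finset.sum_add_distrib]

lemma pb_C_mul_left (c : ℂ) (P G : MvPolynomial (Idx × Λ) ℂ) :
    pb (C c * P) G = C c * pb P G := by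
  simp only [pb, pderiv_C_mul, Finset.mul_sum]
  refine Finset.sum_congr rfl fun x _ => Finset.sum_congr rfl fun i _ =>
    Finset.sum_congr rfl fun j _ => Finset.sum_congr rfl fun k _ => by ring

lemma pb_C_mul_right (c : ℂ) (P G : MvPolynomial (Idx × Λ) ℂ) :
    pb G (C c * P) = C c * pb G P := by
  simp only [pb, pderiv_C_mul, Finset.mul_sum]
  refine Finset.sum_congr rfl fun x _ => Finset.sum_congr rfl fun i _ =>
    Finset.sum_congr rfl fun j _ => Finset.sum_congr rfl fun k _ => by ring

lemma pb_C_right (H : MvPolynomial (Idx × Λ) ℂ) (c : ℂ) : pb H (C c) = 0 := by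
  simp [pb, pderiv_C]

lemma pb_zero_left (H : MvPolynomial (Idx × Λ) ℂ) : pb 0 H = 0 := by
  simp [pb]

lemma pb_mul_right (H F G : MvPolynomial (Idx × Λ) ℂ) :
    pb H (F * G) = pb H F * G + F * pb H G := by
  simp only [pb, pderiv_mul, Finset.sum_mul, Finset.mul_sum, ← Finset.sum_add_distrib]
  refine Finset.sum_congr rfl fun x _ => Finset.sum_congr rfl fun i _ =>
    Finset.sum_congr rfl fun j _ => Finset.sum_congr rfl fun k _ => by ring

lemma pb_sum_left {ι : Type*} (s : Finset ι) (f : ι → MvPolynomial (Idx × Λ) ℂ)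
    (G : MvPolynomial (Idx × Λ) ℂ) :
    pb (∑ a ∈ s, f a) G = ∑ a ∈ s, pb (f a) G := by
  classical
  induction s using Finset.induction_on with
  | empty => simp [pb_zero_left]
  | insert _ _ h ih => rw [Finset.sum_insert h, Finset.sum_insert h, pb_add_left, ih]

lemma pb_zero_right (H : MvPolynomial (Idx × Λ) ℂ) : pb H 0 = 0 := by
  simp [pb]

lemma pb_sum_right {ι : Type*} (s : Finset ι) (f : ι → MvPolynomial (Idx × Λ) ℂ)
    (G : MvPolynomial (Idx × Λ) ℂ) :
    pb G (∑ a ∈ s, f a) = ∑ a ∈ s, pb G (f a) := by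
  classical
  induction s using Finset.induction_on with
  | empty => simp [pb_zero_right]
  | insert _ _ h ih => rw [Finset.sum_insert h, Finset.sum_insert h, pb_add_right, ih]

end AuxAlg

section Flow

open MvPolynomial

variable {Λ : Type} [Fintype Λ] [DecidableEq Λ]

lemma hasDerivAt_evalAt (V : ((Idx × Λ) →₀ ℕ) →₀ ℂ) (M : ℝ → Λ → Fin 3 → ℝ)
    (hODE : ∀ (i : Idx) (x : Λ) (τ : ℝ),
      HasDerivAt (fun τ' => coord i (M τ' x))
        (evalAt (M τ) (pb (Hcl V) (MvPolynomial.X (i, x)))) τ)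
    (F : MvPolynomial (Idx × Λ) ℂ) (τ : ℝ) :
    HasDerivAt (fun τ' => evalAt (M τ') F) (evalAt (M τ) (pb (Hcl V) F)) τ := by
  induction F using MvPolynomial.induction_on with
  | C c =>
      have : (fun τ' => evalAt (M τ') (C c)) = fun _ => c := by
        funext τ'; simp [evalAt]
      rw [this, pb_C_right]
      simpa [evalAt] using hasDerivAt_const τ c
  | add F G hF hG =>
      have := hF.add hG
      have he : (fun τ' => evalAt (M τ') (F + G))
          = fun τ' => evalAt (M τ') F + evalAt (M τ') G := by
        funext τ'; simp [evalAt]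
      rw [he, pb_add_right]
      refine this.congr_deriv ?_
      simp [evalAt]
  | mul_X F p hF =>
      have hX := hODE p.1 p.2 τ
      have hmul := hF.mul hX
      have he : (fun τ' => evalAt (M τ') (F * X p))
          = fun τ' => evalAt (M τ') F * coord p.1 (M τ' p.2) := by
        funext τ'; simp [evalAt]
      rw [he]
      refine hmul.congr_deriv ?_
      rw [pb_mul_right]
      simp [evalAt]

/-- The Casimir polynomial `|M(x)|² = 2 M₊ M₋ + M_z²`. -/
noncomputable def Qpoly (x : Λ) : MvPolynomial (Idx × Λ) ℂ :=
  C 2 * (X (Idx.plus, x) * X (Idx.minus, x)) + X (Idx.z, x) * X (Idx.z, x)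

lemma pderiv_two (p : Idx × Λ) : MvPolynomial.pderiv p (2 : MvPolynomial (Idx × Λ) ℂ) = 0 := by
  rw [show (2 : MvPolynomial (Idx × Λ) ℂ) = C 2 from (map_ofNat C 2).symm]
  simp [pderiv_C]

lemma pb_Q (F : MvPolynomial (Idx × Λ) ℂ) (x : Λ) : pb F (Qpoly x) = 0 := by
  unfold pb
  refine Finset.sum_eq_zero fun x' _ => ?_
  refine Finset.sum_eq_zero fun i _ => ?_
  by_cases hx : x' = x
  · subst hx
    cases i <;>
      · rw [sum_idx]
        simp only [sum_idx, Qpoly, map_add, pderiv_mul, pderiv_C_mul, pderiv_X, eps]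
        simp [Pi.single_apply, Prod.ext_iff, map_ofNat, pderiv_two]
        ring
  · have hz : ∀ j : Idx, pderiv (j, x') (Qpoly x) = 0 := by
      intro j
      have h1 : ∀ k : Idx, pderiv (j, x') (X (k, x) : MvPolynomial (Idx × Λ) ℂ) = 0 := by
        intro k
        apply pderiv_X_of_ne
        intro h
        exact hx (congrArg Prod.snd h).symm
      simp [Qpoly, pderiv_mul, pderiv_C_mul, h1]
    refine Finset.sum_eq_zero fun j _ => Finset.sum_eq_zero fun k _ => ?_
    rw [hz j]
    ring

lemma evalAt_Q (M' : Λ → Fin 3 → ℝ) (x : Λ) :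
    evalAt M' (Qpoly x) = (((M' x 0) ^ 2 + (M' x 1) ^ 2 + (M' x 2) ^ 2 : ℝ) : ℂ) := by
  have hs : (Real.sqrt 2 : ℂ) * (Real.sqrt 2 : ℂ) = 2 := by
    rw [← Complex.ofReal_mul]
    norm_num [Real.mul_self_sqrt]
  have hs0 : (Real.sqrt 2 : ℂ) ≠ 0 := by
    intro h
    rw [← Complex.ofReal_zero] at h
    have := Complex.ofReal_inj.mp h
    have : (0:ℝ) < Real.sqrt 2 := Real.sqrt_pos.mpr (by norm_num)
    simp_all
  simp only [evalAt, Qpoly, map_add, map_mul, eval_C, eval_X, coord]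
  push_cast
  rw [div_mul_div_comm, hs]
  have key : ((M' x 0 : ℂ) + Complex.I * (M' x 1 : ℂ)) * ((M' x 0 : ℂ) - Complex.I * (M' x 1 : ℂ))
      = (M' x 0 : ℂ) ^ 2 + (M' x 1 : ℂ) ^ 2 := by
    linear_combination (-((M' x 1 : ℂ)) ^ 2) * Complex.I_sq
  rw [key]
  ring

lemma inBall_forever (V : ((Idx × Λ) →₀ ℕ) →₀ ℂ) (M : ℝ → Λ → Fin 3 → ℝ)
    (hODE : ∀ (i : Idx) (x : Λ) (τ : ℝ),
      HasDerivAt (fun τ' => coord i (M τ' x))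
        (evalAt (M τ) (pb (Hcl V) (MvPolynomial.X (i, x)))) τ)
    (hM0 : inBall (M 0)) (τ : ℝ) : inBall (M τ) := by
  intro x
  have hderiv : ∀ σ : ℝ, HasDerivAt (fun σ' => evalAt (M σ') (Qpoly x)) 0 σ := by
    intro σ
    have := hasDerivAt_evalAt V M hODE (Qpoly x) σ
    rwa [pb_Q, show evalAt (M σ) (0 : MvPolynomial (Idx × Λ) ℂ) = 0 by simp [evalAt]] at this
  have hconst : evalAt (M τ) (Qpoly x) = evalAt (M 0) (Qpoly x) :=
    is_const_of_deriv_eq_zero (fun σ => (hderiv σ).differentiableAt)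
      (fun σ => (hderiv σ).deriv) τ 0
  rw [evalAt_Q, evalAt_Q] at hconst
  have h := Complex.ofReal_inj.mp hconst
  rw [h]
  exact hM0 x

end Flow

section Norms

open MvPolynomial

variable {Λ : Type} [Fintype Λ] [DecidableEq Λ]

/-- Degree-weighted ℓ¹ norm of the coefficients. -/
noncomputable def Nnorm (θ : ℝ) (F : MvPolynomial (Idx × Λ) ℂ) : ℝ :=
  ∑ γ ∈ F.support, ‖F.coeff γ‖ * Real.exp (θ * deg γ)

lemma Nnorm_nonneg (θ : ℝ) (F : MvPolynomial (Idx × Λ) ℂ) : 0 ≤ Nnorm θ F :=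
  Finset.sum_nonneg fun _ _ => mul_nonneg (norm_nonneg _) (Real.exp_pos _).le

lemma Nnorm_monomial_le (θ : ℝ) (σ : (Idx × Λ) →₀ ℕ) (c : ℂ) :
    Nnorm θ (monomial σ c) ≤ ‖c‖ * Real.exp (θ * deg σ) := by
  by_cases hc : c = 0
  · simp [Nnorm, hc]
  · rw [Nnorm, support_monomial, if_neg hc, Finset.sum_singleton, coeff_monomial, if_pos rfl]

lemma Nnorm_add_le (θ : ℝ) (F G : MvPolynomial (Idx × Λ) ℂ) :
    Nnorm θ (F + G) ≤ Nnorm θ F + Nnorm θ G := by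
  have h1 : Nnorm θ (F + G) ≤
      ∑ γ ∈ F.support ∪ G.support, ‖(F + G).coeff γ‖ * Real.exp (θ * deg γ) := by
    refine Finset.sum_le_sum_of_subset_of_nonneg (support_add) fun γ _ _ =>
      mul_nonneg (norm_nonneg _) (Real.exp_pos _).le
  have h2 : ∑ γ ∈ F.support ∪ G.support, ‖(F + G).coeff γ‖ * Real.exp (θ * deg γ) ≤
      ∑ γ ∈ F.support ∪ G.support,
        (‖F.coeff γ‖ * Real.exp (θ * deg γ) + ‖G.coeff γ‖ * Real.exp (θ * deg γ)) := by
    refine Finset.sum_le_sum fun γ _ => ?_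
    rw [← add_mul]
    exact mul_le_mul_of_nonneg_right (by rw [coeff_add]; exact norm_add_le _ _)
      (Real.exp_pos _).le
  rw [Finset.sum_add_distrib] at h2
  have e1 : ∑ γ ∈ F.support ∪ G.support, ‖F.coeff γ‖ * Real.exp (θ * deg γ) = Nnorm θ F := by
    rw [Nnorm]
    refine (Finset.sum_subset Finset.subset_union_left fun γ _ hγ => ?_).symm
    rw [notMem_support_iff.mp hγ]; simp
  have e2 : ∑ γ ∈ F.support ∪ G.support, ‖G.coeff γ‖ * Real.exp (θ * deg γ) = Nnorm θ G := by
    rw [Nnorm]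
    refine (Finset.sum_subset Finset.subset_union_right fun γ _ hγ => ?_).symm
    rw [notMem_support_iff.mp hγ]; simp
  rw [e1, e2] at h2
  exact h1.trans h2

lemma Nnorm_zero (θ : ℝ) : Nnorm θ (0 : MvPolynomial (Idx × Λ) ℂ) = 0 := by simp [Nnorm]

lemma Nnorm_sum_le {ι : Type*} (θ : ℝ) (s : Finset ι) (f : ι → MvPolynomial (Idx × Λ) ℂ) :
    Nnorm θ (∑ a ∈ s, f a) ≤ ∑ a ∈ s, Nnorm θ (f a) := by
  classical
  induction s using Finset.induction_on with
  | empty => simp [Nnorm_zero]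
  | insert _ _ h ih =>
      rw [Finset.sum_insert h, Finset.sum_insert h]
      exact (Nnorm_add_le _ _ _).trans (by linarith)

lemma Nnorm_C_mul_le (θ : ℝ) (c : ℂ) (P : MvPolynomial (Idx × Λ) ℂ) :
    Nnorm θ (C c * P) ≤ ‖c‖ * Nnorm θ P := by
  have hsub : (C c * P).support ⊆ P.support := by
    intro γ hγ
    rw [mem_support_iff] at hγ ⊢
    intro h0
    exact hγ (by rw [coeff_C_mul, h0, mul_zero])
  have h1 : Nnorm θ (C c * P) ≤ ∑ γ ∈ P.support, ‖(C c * P).coeff γ‖ * Real.exp (θ * deg γ) :=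
    Finset.sum_le_sum_of_subset_of_nonneg hsub fun γ _ _ =>
      mul_nonneg (norm_nonneg _) (Real.exp_pos _).le
  refine h1.trans (le_of_eq ?_)
  calc ∑ γ ∈ P.support, ‖(C c * P).coeff γ‖ * Real.exp (θ * deg γ)
      = ∑ γ ∈ P.support, ‖c‖ * (‖P.coeff γ‖ * Real.exp (θ * deg γ)) := by
        refine Finset.sum_congr rfl fun γ _ => ?_
        rw [coeff_C_mul, norm_mul]; ring
    _ = ‖c‖ * Nnorm θ P := by rw [← Finset.mul_sum, Nnorm]

lemma norm_coord_le_one (i : Idx) (v : Fin 3 → ℝ)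
    (h : v 0 ^ 2 + v 1 ^ 2 + v 2 ^ 2 ≤ 1) : ‖coord i v‖ ≤ 1 := by
  have h0 : (0:ℝ) ≤ v 0 ^ 2 := sq_nonneg _
  have h1 : (0:ℝ) ≤ v 1 ^ 2 := sq_nonneg _
  have h2 : (0:ℝ) ≤ v 2 ^ 2 := sq_nonneg _
  have key : ∀ z : ℂ, ‖z‖ ^ 2 ≤ 1 → ‖z‖ ≤ 1 := by
    intro z hz
    nlinarith [norm_nonneg z]
  cases i
  case z =>
    apply key
    rw [coord, Complex.norm_real, Real.norm_eq_abs, sq_abs]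
    nlinarith
  case plus =>
    apply key
    rw [coord, norm_div, div_pow]
    have hn : ‖((v 0 : ℂ) + Complex.I * (v 1 : ℂ))‖ ^ 2 = v 0 ^ 2 + v 1 ^ 2 := by
      rw [Complex.sq_norm]
      rw [show ((v 0 : ℂ) + Complex.I * (v 1 : ℂ)) = Complex.mk (v 0) (v 1) by
        apply Complex.ext <;> simp]
      simp [Complex.normSq_mk]
      ring
    have hd : ‖((Real.sqrt 2 : ℝ) : ℂ)‖ ^ 2 = 2 := by
      rw [Complex.norm_real, Real.norm_eq_abs, sq_abs, Real.sq_sqrt]; norm_num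
    rw [hn, hd]
    nlinarith
  case minus =>
    apply key
    rw [coord, norm_div, div_pow]
    have hn : ‖((v 0 : ℂ) - Complex.I * (v 1 : ℂ))‖ ^ 2 = v 0 ^ 2 + v 1 ^ 2 := by
      rw [Complex.sq_norm]
      rw [show ((v 0 : ℂ) - Complex.I * (v 1 : ℂ)) = Complex.mk (v 0) (-(v 1)) by
        apply Complex.ext <;> simp]
      simp [Complex.normSq_mk]
      ring
    have hd : ‖((Real.sqrt 2 : ℝ) : ℂ)‖ ^ 2 = 2 := by
      rw [Complex.norm_real, Real.norm_eq_abs, sq_abs, Real.sq_sqrt]; norm_num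
    rw [hn, hd]
    nlinarith

lemma norm_evalAt_le {M' : Λ → Fin 3 → ℝ} (hM : inBall M') (F : MvPolynomial (Idx × Λ) ℂ) :
    ‖evalAt M' F‖ ≤ Nnorm 0 F := by
  rw [evalAt, eval_eq]
  refine (norm_sum_le _ _).trans ?_
  rw [Nnorm]
  refine Finset.sum_le_sum fun γ _ => ?_
  rw [norm_mul, zero_mul, Real.exp_zero, mul_one]
  have : ‖∏ p ∈ γ.support, coord p.1 (M' p.2) ^ γ p‖ ≤ 1 := by
    rw [norm_prod]
    refine Finset.prod_le_one (fun p _ => norm_nonneg _) fun p _ => ?_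
    rw [norm_pow]
    exact pow_le_one₀ (norm_nonneg _) (norm_coord_le_one p.1 (M' p.2) (hM p.2))
  calc ‖F.coeff γ‖ * ‖∏ p ∈ γ.support, coord p.1 (M' p.2) ^ γ p‖
      ≤ ‖F.coeff γ‖ * 1 := mul_le_mul_of_nonneg_left this (norm_nonneg _)
    _ = ‖F.coeff γ‖ := mul_one _

instance : Nonempty {M : Λ → Fin 3 → ℝ // inBall M} :=
  ⟨⟨fun _ _ => 0, fun _ => by norm_num⟩⟩

lemma supNorm_le_Nnorm (F : MvPolynomial (Idx × Λ) ℂ) : supNorm F ≤ Nnorm 0 F :=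
  ciSup_le fun M => norm_evalAt_le M.2 F

lemma supNorm_nonneg (F : MvPolynomial (Idx × Λ) ℂ) : 0 ≤ supNorm F :=
  Real.iSup_nonneg fun _ => norm_nonneg _

lemma norm_evalAt_le_supNorm {M' : Λ → Fin 3 → ℝ} (hM : inBall M') (F : MvPolynomial (Idx × Λ) ℂ) :
    ‖evalAt M' F‖ ≤ supNorm F := by
  refine le_ciSup_of_le ⟨Nnorm 0 F, ?_⟩ (⟨M', hM⟩ : {M : Λ → Fin 3 → ℝ // inBall M}) le_rfl
  rintro y ⟨N, rfl⟩
  exact norm_evalAt_le N.2 F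

end Norms

section DegWt

variable {Λ : Type} [Fintype Λ] [DecidableEq Λ]

lemma deg_add (a b : (Idx × Λ) →₀ ℕ) : deg (a + b) = deg a + deg b := by
  unfold deg
  exact Finsupp.sum_add_index' (fun _ => rfl) (fun _ _ _ => rfl)

lemma deg_single (p : Idx × Λ) (n : ℕ) : deg (Finsupp.single p n) = n :=
  Finsupp.sum_single_index rfl

lemma sub_single_add_cancel {α : (Idx × Λ) →₀ ℕ} {p : Idx × Λ} (h : α p ≠ 0) :
    (α - Finsupp.single p 1) + Finsupp.single p 1 = α := by
  ext q
  by_cases hq : q = p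
  · subst hq
    simp [Finsupp.single_apply]
    omega
  · have hq' : p ≠ q := Ne.symm hq
    simp [Finsupp.single_apply, hq']

lemma deg_sub_single {α : (Idx × Λ) →₀ ℕ} {p : Idx × Λ} (h : α p ≠ 0) :
    deg (α - Finsupp.single p 1) + 1 = deg α := by
  conv_rhs => rw [← sub_single_add_cancel h]
  rw [deg_add, deg_single]

lemma deg_eq_sum_univ (α : (Idx × Λ) →₀ ℕ) : deg α = ∑ p : Idx × Λ, α p := by
  unfold deg
  exact Finsupp.sum_fintype _ _ (fun _ => rfl)

lemma sum_wt (γ : (Idx × Λ) →₀ ℕ) : ∑ x : Λ, wt γ x = deg γ := by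
  rw [deg_eq_sum_univ, Fintype.sum_prod_type]
  rw [Finset.sum_comm]
  rfl

lemma wt_le_deg (α : (Idx × Λ) →₀ ℕ) (x : Λ) : wt α x ≤ deg α := by
  rw [← sum_wt]
  exact Finset.single_le_sum (fun x' _ => Nat.zero_le _) (Finset.mem_univ x)

lemma one_le_deg_of_wt {α : (Idx × Λ) →₀ ℕ} {x : Λ} (h : wt α x ≠ 0) : 1 ≤ deg α :=
  le_trans (Nat.one_le_iff_ne_zero.mpr h) (wt_le_deg α x)

end DegWt

section VnormLemmas

variable {Λ : Type} [Fintype Λ] [DecidableEq Λ] [Nonempty Λ]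

lemma VnormPart_eq (V : ((Idx × Λ) →₀ ℕ) →₀ ℂ) (n : ℕ) (x : Λ) :
    VnormPart (fun α => V α) n x
      = ∑ α ∈ V.support.filter (fun α => deg α = n), (wt α x : ℝ) * ‖V α‖ := by
  rw [VnormPart]
  rw [tsum_eq_sum (s := V.support.subtype (fun α => deg α = n))
    (fun b hb => ?_)]
  · exact Finset.sum_subtype_eq_sum_filter (fun α => (wt α x : ℝ) * ‖V α‖) (p := fun α => deg α = n)
  · have : b.1 ∉ V.support := by
      intro hmem
      exact hb (by simpa [Finset.mem_subtype] using hmem)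
    rw [Finsupp.notMem_support_iff.mp this]
    simp

lemma VnormPart_nonneg (V : ((Idx × Λ) →₀ ℕ) →₀ ℂ) (n : ℕ) (x : Λ) :
    0 ≤ VnormPart (fun α => V α) n x := by
  rw [VnormPart_eq]
  exact Finset.sum_nonneg fun _ _ => mul_nonneg (Nat.cast_nonneg _) (norm_nonneg _)

/-- `sup_x Σ_{|α|=n} |α(x)| |V(α)|`. -/
noncomputable def Wsup (V : ((Idx × Λ) →₀ ℕ) →₀ ℂ) (n : ℕ) : ℝ :=
  ⨆ x : Λ, VnormPart (fun α => V α) n x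

lemma VnormPart_le_Wsup (V : ((Idx × Λ) →₀ ℕ) →₀ ℂ) (n : ℕ) (x : Λ) :
    VnormPart (fun α => V α) n x ≤ Wsup V n :=
  le_ciSup (Set.Finite.bddAbove (Set.finite_range _)) x

lemma Wsup_nonneg (V : ((Idx × Λ) →₀ ℕ) →₀ ℂ) (n : ℕ) : 0 ≤ Wsup V n :=
  Real.iSup_nonneg fun x => VnormPart_nonneg V n x

lemma Wsup_eq_zero (V : ((Idx × Λ) →₀ ℕ) →₀ ℂ) (n : ℕ)
    (h : n ∉ V.support.image deg) : Wsup V n = 0 := by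
  have hz : ∀ x : Λ, VnormPart (fun α => V α) n x = 0 := by
    intro x
    rw [VnormPart_eq]
    refine Finset.sum_eq_zero fun α hα => ?_
    rw [Finset.mem_filter] at hα
    exact absurd (hα.2 ▸ Finset.mem_image_of_mem deg hα.1) h
  simp only [Wsup, hz]
  exact ciSup_const

lemma summable_Wsup (V : ((Idx × Λ) →₀ ℕ) →₀ ℂ) :
    Summable (fun n => Wsup V n * Real.exp n) := by
  refine summable_of_ne_finset_zero (s := V.support.image deg) fun n hn => ?_
  rw [Wsup_eq_zero V n hn, zero_mul]

lemma Vnorm_eq_tsum (V : ((Idx × Λ) →₀ ℕ) →₀ ℂ) :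
    Vnorm (fun α => V α) = ∑' n : ℕ, Wsup V n * Real.exp n := rfl

lemma Vnorm_nonneg (V : ((Idx × Λ) →₀ ℕ) →₀ ℂ) : 0 ≤ Vnorm (fun α => V α) := by
  rw [Vnorm_eq_tsum]
  exact tsum_nonneg fun n => mul_nonneg (Wsup_nonneg V n) (Real.exp_pos _).le

lemma key_site_bound (V : ((Idx × Λ) →₀ ℕ) →₀ ℂ) (x : Λ) :
    ∑ α ∈ V.support, (wt α x : ℝ) * ‖V α‖ * Real.exp (deg α) ≤ Vnorm (fun α => V α) := by
  have hmaps : ∀ α ∈ V.support, deg α ∈ V.support.image deg :=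
    fun α hα => Finset.mem_image_of_mem deg hα
  rw [← Finset.sum_fiberwise_of_maps_to hmaps
    (fun α => (wt α x : ℝ) * ‖V α‖ * Real.exp (deg α))]
  have step1 : ∀ n ∈ V.support.image deg,
      ∑ α ∈ V.support.filter (fun α => deg α = n), (wt α x : ℝ) * ‖V α‖ * Real.exp (deg α)
        ≤ Wsup V n * Real.exp n := by
    intro n _
    have : ∑ α ∈ V.support.filter (fun α => deg α = n),
        (wt α x : ℝ) * ‖V α‖ * Real.exp (deg α)
        = VnormPart (fun α => V α) n x * Real.exp n := by
      rw [VnormPart_eq, Finset.sum_mul]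
      refine Finset.sum_congr rfl fun α hα => ?_
      rw [(Finset.mem_filter.mp hα).2]
    rw [this]
    exact mul_le_mul_of_nonneg_right (VnormPart_le_Wsup V n x) (Real.exp_pos _).le
  refine (Finset.sum_le_sum step1).trans ?_
  rw [Vnorm_eq_tsum]
  exact Summable.sum_le_tsum _ (fun n _ => mul_nonneg (Wsup_nonneg V n) (Real.exp_pos _).le)
    (summable_Wsup V)

end VnormLemmas

section KeyEstimate

open MvPolynomial

variable {Λ : Type} [Fintype Λ] [DecidableEq Λ]

lemma eps_sum_le (i j : Idx) : ∑ k : Idx, ‖eps i j k‖ ≤ 1 := by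
  cases i <;> cases j <;> · rw [sum_idx]; norm_num [eps]

lemma deg_zero : deg (0 : (Idx × Λ) →₀ ℕ) = 0 := by simp [deg]

lemma apply_le_deg (α : (Idx × Λ) →₀ ℕ) (p : Idx × Λ) : α p ≤ deg α := by
  rw [deg_eq_sum_univ]
  exact Finset.single_le_sum (fun _ _ => Nat.zero_le _) (Finset.mem_univ p)

lemma Nnorm_pb_single_le {θ : ℝ} (hθ : 0 ≤ θ) (α γ : (Idx × Λ) →₀ ℕ)
    (i j k : Idx) (x : Λ) :
    Nnorm θ (C (Complex.I * eps i j k) *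
        (pderiv (i, x) (monom α)) * (pderiv (j, x) (monom γ)) * X (k, x))
      ≤ ‖eps i j k‖ * (α (i, x) : ℝ) * (γ (j, x) : ℝ) *
          Real.exp (θ * ((deg α : ℝ) + (deg γ : ℝ) - 1)) := by
  have hRnn : 0 ≤ ‖eps i j k‖ * (α (i, x) : ℝ) * (γ (j, x) : ℝ) *
      Real.exp (θ * ((deg α : ℝ) + (deg γ : ℝ) - 1)) := by positivity
  by_cases hα : α (i, x) = 0
  · have : pderiv (i, x) (monom α) = 0 := by
      rw [monom, pderiv_monomial, hα]; simp
    rw [this, mul_zero, zero_mul, zero_mul, Nnorm_zero]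
    exact hRnn
  by_cases hγ : γ (j, x) = 0
  · have : pderiv (j, x) (monom γ) = 0 := by
      rw [monom, pderiv_monomial, hγ]; simp
    rw [this, mul_zero, zero_mul, Nnorm_zero]
    exact hRnn
  -- both coordinates positive: the product is a single monomial
  have hXm : (X (k, x) : MvPolynomial (Idx × Λ) ℂ) = monomial (Finsupp.single (k, x) 1) 1 :=
    rfl
  have hC : (C (Complex.I * eps i j k) : MvPolynomial (Idx × Λ) ℂ)
      = monomial 0 (Complex.I * eps i j k) := by rw [C_apply]
  rw [monom, monom, pderiv_monomial, pderiv_monomial, hXm, hC,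
    monomial_mul, monomial_mul, monomial_mul]
  refine (Nnorm_monomial_le _ _ _).trans ?_
  have hdeg : (deg (0 + (α - Finsupp.single (i, x) 1) + (γ - Finsupp.single (j, x) 1)
      + Finsupp.single (k, x) 1) : ℝ) = (deg α : ℝ) + (deg γ : ℝ) - 1 := by
    have h1 : deg (α - Finsupp.single (i, x) 1) + 1 = deg α := deg_sub_single hα
    have h2 : deg (γ - Finsupp.single (j, x) 1) + 1 = deg γ := deg_sub_single hγ
    rw [deg_add, deg_add, deg_add, deg_zero, deg_single]
    push_cast [← h1, ← h2]
    ring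
  rw [hdeg]
  apply mul_le_mul_of_nonneg_right _ (Real.exp_pos _).le
  simp [norm_mul, Complex.norm_natCast]

lemma Nnorm_pb_monom_le {θ : ℝ} (hθ : 0 ≤ θ) (α γ : (Idx × Λ) →₀ ℕ) :
    Nnorm θ (pb (monom α) (monom γ)) ≤
      ∑ x : Λ, (wt α x : ℝ) * (wt γ x : ℝ) *
        Real.exp (θ * ((deg α : ℝ) + (deg γ : ℝ) - 1)) := by
  set E := Real.exp (θ * ((deg α : ℝ) + (deg γ : ℝ) - 1)) with hE
  have hE0 : 0 ≤ E := (Real.exp_pos _).le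
  rw [pb]
  refine (Nnorm_sum_le _ _ _).trans (Finset.sum_le_sum fun x _ => ?_)
  refine (Nnorm_sum_le _ _ _).trans ?_
  have step : ∀ i : Idx,
      Nnorm θ (∑ j : Idx, ∑ k : Idx, C (Complex.I * eps i j k) *
          (pderiv (i, x) (monom α)) * (pderiv (j, x) (monom γ)) * X (k, x))
        ≤ ∑ j : Idx, (α (i, x) : ℝ) * (γ (j, x) : ℝ) * E := by
    intro i
    refine (Nnorm_sum_le _ _ _).trans (Finset.sum_le_sum fun j _ => ?_)
    refine (Nnorm_sum_le _ _ _).trans ?_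
    have h1 : ∀ k : Idx, Nnorm θ (C (Complex.I * eps i j k) *
        (pderiv (i, x) (monom α)) * (pderiv (j, x) (monom γ)) * X (k, x))
          ≤ ‖eps i j k‖ * ((α (i, x) : ℝ) * (γ (j, x) : ℝ) * E) := by
      intro k
      refine (Nnorm_pb_single_le hθ α γ i j k x).trans (le_of_eq ?_)
      rw [hE]; ring
    refine (Finset.sum_le_sum fun k _ => h1 k).trans ?_
    rw [← Finset.sum_mul]
    calc (∑ k : Idx, ‖eps i j k‖) * ((α (i, x) : ℝ) * (γ (j, x) : ℝ) * E)
        ≤ 1 * ((α (i, x) : ℝ) * (γ (j, x) : ℝ) * E) :=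
          mul_le_mul_of_nonneg_right (eps_sum_le i j) (by positivity)
      _ = (α (i, x) : ℝ) * (γ (j, x) : ℝ) * E := one_mul _
  refine (Finset.sum_le_sum fun i _ => step i).trans (le_of_eq ?_)
  have hwα : (wt α x : ℝ) = ∑ i : Idx, (α (i, x) : ℝ) := by
    rw [wt]; push_cast; rfl
  have hwγ : (wt γ x : ℝ) = ∑ j : Idx, (γ (j, x) : ℝ) := by
    rw [wt]; push_cast; rfl
  rw [hwα, hwγ]
  simp only [Finset.sum_mul, Finset.mul_sum]
  rw [Finset.sum_comm]

lemma mul_exp_bound {δ θ : ℝ} (hδ : 0 < δ) (d : ℝ) (hd : 0 ≤ d) :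
    d * Real.exp (θ * d) ≤ Real.exp ((θ + δ) * d) / (Real.exp 1 * δ) := by
  have h1 : δ * d ≤ Real.exp (δ * d - 1) := by
    have := Real.add_one_le_exp (δ * d - 1); linarith
  have h2 : Real.exp (δ * d - 1) = Real.exp (δ * d) / Real.exp 1 := Real.exp_sub _ _
  have h3 : d ≤ Real.exp (δ * d) / (Real.exp 1 * δ) := by
    rw [h2] at h1
    have e1 : (0:ℝ) < Real.exp 1 := Real.exp_pos 1
    have e2 : (0:ℝ) < Real.exp 1 * δ := by positivity
    have hnum : d * (Real.exp 1 * δ) ≤ Real.exp (δ * d) := by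
      calc d * (Real.exp 1 * δ) = (δ * d) * Real.exp 1 := by ring
        _ ≤ (Real.exp (δ * d) / Real.exp 1) * Real.exp 1 :=
            mul_le_mul_of_nonneg_right h1 e1.le
        _ = Real.exp (δ * d) := by field_simp
    calc d = d * (Real.exp 1 * δ) / (Real.exp 1 * δ) := by field_simp
      _ ≤ Real.exp (δ * d) / (Real.exp 1 * δ) :=
          (div_le_div_iff_of_pos_right e2).mpr hnum
  calc d * Real.exp (θ * d)
      ≤ (Real.exp (δ * d) / (Real.exp 1 * δ)) * Real.exp (θ * d) :=
        mul_le_mul_of_nonneg_right h3 (Real.exp_pos _).le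
    _ = Real.exp ((θ + δ) * d) / (Real.exp 1 * δ) := by
        rw [div_mul_eq_mul_div, ← Real.exp_add]
        ring_nf

lemma Nnorm_pb_Hcl_le [Nonempty Λ] (V : ((Idx × Λ) →₀ ℕ) →₀ ℂ) {θ δ : ℝ}
    (hθ : 0 ≤ θ) (hδ : 0 < δ) (hθδ : θ + δ ≤ 1) (F : MvPolynomial (Idx × Λ) ℂ) :
    Nnorm θ (pb (Hcl V) F) ≤
      Vnorm (fun α => V α) / (Real.exp 1 * Real.exp 1 * δ) * Nnorm (θ + δ) F := by
  have hθ1 : θ ≤ 1 := by linarith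
  have hVn : 0 ≤ Vnorm (fun α => V α) := Vnorm_nonneg V
  have expand : pb (Hcl V) F = ∑ α ∈ V.support, C (V α) *
      ∑ γ ∈ F.support, C (F.coeff γ) * pb (monom α) (monom γ) := by
    rw [Hcl, pb_sum_left]
    refine Finset.sum_congr rfl fun α _ => ?_
    rw [pb_C_mul_left]
    congr 1
    conv_lhs => rw [← support_sum_monomial_coeff F]
    rw [pb_sum_right]
    refine Finset.sum_congr rfl fun γ _ => ?_
    rw [show (monomial γ) (F.coeff γ) = C (F.coeff γ) * monom γ by
      rw [monom, C_mul_monomial, mul_one], pb_C_mul_right]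
  rw [expand]
  -- first bound by the double sum of monomial brackets
  have step1 : Nnorm θ (∑ α ∈ V.support, C (V α) *
      ∑ γ ∈ F.support, C (F.coeff γ) * pb (monom α) (monom γ))
        ≤ ∑ α ∈ V.support, ‖V α‖ * ∑ γ ∈ F.support, ‖F.coeff γ‖ *
            ∑ x : Λ, (wt α x : ℝ) * (wt γ x : ℝ) *
              Real.exp (θ * ((deg α : ℝ) + (deg γ : ℝ) - 1)) := by
    refine (Nnorm_sum_le _ _ _).trans (Finset.sum_le_sum fun α _ => ?_)
    refine (Nnorm_C_mul_le _ _ _).trans ?_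
    refine mul_le_mul_of_nonneg_left ?_ (norm_nonneg _)
    refine (Nnorm_sum_le _ _ _).trans (Finset.sum_le_sum fun γ _ => ?_)
    refine (Nnorm_C_mul_le _ _ _).trans ?_
    exact mul_le_mul_of_nonneg_left (Nnorm_pb_monom_le hθ α γ) (norm_nonneg _)
  refine step1.trans ?_
  -- reorganize: pull the γ-sum outside
  have swap : ∑ α ∈ V.support, ‖V α‖ * ∑ γ ∈ F.support, ‖F.coeff γ‖ *
      ∑ x : Λ, (wt α x : ℝ) * (wt γ x : ℝ) *
        Real.exp (θ * ((deg α : ℝ) + (deg γ : ℝ) - 1))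
      = ∑ γ ∈ F.support, ‖F.coeff γ‖ *
          ∑ x : Λ, (wt γ x : ℝ) * ∑ α ∈ V.support, ‖V α‖ * (wt α x : ℝ) *
            Real.exp (θ * ((deg α : ℝ) + (deg γ : ℝ) - 1)) := by
    simp only [Finset.mul_sum]
    rw [Finset.sum_comm]
    refine Finset.sum_congr rfl fun γ _ => ?_
    rw [Finset.sum_comm]
    refine Finset.sum_congr rfl fun x _ => ?_
    refine Finset.sum_congr rfl fun α _ => by ring
  rw [swap]
  -- per-γ estimate
  have perγ : ∀ γ ∈ F.support, ‖F.coeff γ‖ *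
      ∑ x : Λ, (wt γ x : ℝ) * ∑ α ∈ V.support, ‖V α‖ * (wt α x : ℝ) *
        Real.exp (θ * ((deg α : ℝ) + (deg γ : ℝ) - 1))
      ≤ Vnorm (fun α => V α) / (Real.exp 1 * Real.exp 1 * δ) *
          (‖F.coeff γ‖ * Real.exp ((θ + δ) * deg γ)) := by
    intro γ _
    have inner : ∀ x : Λ, ∑ α ∈ V.support, ‖V α‖ * (wt α x : ℝ) *
        Real.exp (θ * ((deg α : ℝ) + (deg γ : ℝ) - 1))
        ≤ Vnorm (fun α => V α) * Real.exp (θ * (deg γ : ℝ)) / Real.exp 1 := by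
      intro x
      have pt : ∀ α ∈ V.support, ‖V α‖ * (wt α x : ℝ) *
          Real.exp (θ * ((deg α : ℝ) + (deg γ : ℝ) - 1))
          ≤ (wt α x : ℝ) * ‖V α‖ * Real.exp (deg α) *
              (Real.exp (θ * (deg γ : ℝ)) / Real.exp 1) := by
        intro α _
        by_cases hw : wt α x = 0
        · rw [hw]; simp
        · have hd1 : (1 : ℝ) ≤ (deg α : ℝ) := by
            exact_mod_cast one_le_deg_of_wt hw
          have hexp : Real.exp (θ * ((deg α : ℝ) + (deg γ : ℝ) - 1))
              ≤ Real.exp (deg α) * (Real.exp (θ * (deg γ : ℝ)) / Real.exp 1) := by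
            rw [← Real.exp_sub, ← Real.exp_add]
            apply Real.exp_le_exp.mpr
            have : θ * ((deg α : ℝ) - 1) ≤ (deg α : ℝ) - 1 := by
              nlinarith
            nlinarith
          calc ‖V α‖ * (wt α x : ℝ) *
              Real.exp (θ * ((deg α : ℝ) + (deg γ : ℝ) - 1))
              ≤ ‖V α‖ * (wt α x : ℝ) *
                (Real.exp (deg α) * (Real.exp (θ * (deg γ : ℝ)) / Real.exp 1)) :=
                mul_le_mul_of_nonneg_left hexp (by positivity)
            _ = (wt α x : ℝ) * ‖V α‖ * Real.exp (deg α) *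
                (Real.exp (θ * (deg γ : ℝ)) / Real.exp 1) := by ring
      refine (Finset.sum_le_sum pt).trans ?_
      rw [← Finset.sum_mul]
      calc (∑ α ∈ V.support, (wt α x : ℝ) * ‖V α‖ * Real.exp (deg α)) *
            (Real.exp (θ * (deg γ : ℝ)) / Real.exp 1)
          ≤ Vnorm (fun α => V α) * (Real.exp (θ * (deg γ : ℝ)) / Real.exp 1) :=
            mul_le_mul_of_nonneg_right (key_site_bound V x) (by positivity)
        _ = Vnorm (fun α => V α) * Real.exp (θ * (deg γ : ℝ)) / Real.exp 1 := by ring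
    have hsum : ∑ x : Λ, (wt γ x : ℝ) * ∑ α ∈ V.support, ‖V α‖ * (wt α x : ℝ) *
        Real.exp (θ * ((deg α : ℝ) + (deg γ : ℝ) - 1))
        ≤ (deg γ : ℝ) * (Vnorm (fun α => V α) * Real.exp (θ * (deg γ : ℝ)) / Real.exp 1) := by
      have : ∑ x : Λ, (wt γ x : ℝ) * ∑ α ∈ V.support, ‖V α‖ * (wt α x : ℝ) *
          Real.exp (θ * ((deg α : ℝ) + (deg γ : ℝ) - 1))
          ≤ ∑ x : Λ, (wt γ x : ℝ) *
              (Vnorm (fun α => V α) * Real.exp (θ * (deg γ : ℝ)) / Real.exp 1) :=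
        Finset.sum_le_sum fun x _ =>
          mul_le_mul_of_nonneg_left (inner x) (Nat.cast_nonneg _)
      refine this.trans (le_of_eq ?_)
      rw [← Finset.sum_mul]
      congr 1
      rw [← Nat.cast_sum, sum_wt]
    have hd : (deg γ : ℝ) * Real.exp (θ * (deg γ : ℝ))
        ≤ Real.exp ((θ + δ) * (deg γ : ℝ)) / (Real.exp 1 * δ) :=
      mul_exp_bound hδ _ (Nat.cast_nonneg _)
    calc ‖F.coeff γ‖ * ∑ x : Λ, (wt γ x : ℝ) * ∑ α ∈ V.support, ‖V α‖ * (wt α x : ℝ) *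
          Real.exp (θ * ((deg α : ℝ) + (deg γ : ℝ) - 1))
        ≤ ‖F.coeff γ‖ * ((deg γ : ℝ) *
            (Vnorm (fun α => V α) * Real.exp (θ * (deg γ : ℝ)) / Real.exp 1)) :=
          mul_le_mul_of_nonneg_left hsum (norm_nonneg _)
      _ = ‖F.coeff γ‖ * (Vnorm (fun α => V α) / Real.exp 1) *
            ((deg γ : ℝ) * Real.exp (θ * (deg γ : ℝ))) := by ring
      _ ≤ ‖F.coeff γ‖ * (Vnorm (fun α => V α) / Real.exp 1) *
            (Real.exp ((θ + δ) * (deg γ : ℝ)) / (Real.exp 1 * δ)) :=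
          mul_le_mul_of_nonneg_left hd (by positivity)
      _ = Vnorm (fun α => V α) / (Real.exp 1 * Real.exp 1 * δ) *
            (‖F.coeff γ‖ * Real.exp ((θ + δ) * deg γ)) := by
          field_simp
  refine (Finset.sum_le_sum perγ).trans (le_of_eq ?_)
  rw [← Finset.mul_sum, Nnorm]

end KeyEstimate

section Iteration

open MvPolynomial

variable {Λ : Type} [Fintype Λ] [DecidableEq Λ] [Nonempty Λ]

lemma Nnorm_monom_le_exp (β : (Idx × Λ) →₀ ℕ) :
    Nnorm 1 (monom β) ≤ Real.exp (deg β) := by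
  refine (Nnorm_monomial_le 1 β 1).trans (le_of_eq ?_)
  rw [norm_one, one_mul, one_mul]

lemma pbIter_succ (V : ((Idx × Λ) →₀ ℕ) →₀ ℂ) (j : ℕ) (A : MvPolynomial (Idx × Λ) ℂ) :
    pbIter (Hcl V) (j + 1) A = pb (Hcl V) (pbIter (Hcl V) j A) := rfl

lemma Nnorm_pbIter_le (V : ((Idx × Λ) →₀ ℕ) →₀ ℂ) (β : (Idx × Λ) →₀ ℕ)
    (l : ℕ) (hl : 1 ≤ l) :
    ∀ j, j ≤ l → Nnorm (((l : ℝ) - j) / l) (pbIter (Hcl V) j (monom β))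
      ≤ (Vnorm (fun α => V α) * l / (Real.exp 1 * Real.exp 1)) ^ j * Real.exp (deg β) := by
  have hl0 : (0:ℝ) < l := by exact_mod_cast hl
  intro j
  induction j with
  | zero =>
      intro _
      have : ((l : ℝ) - (0:ℕ)) / l = 1 := by
        push_cast; field_simp; ring
      rw [this, pow_zero, one_mul]
      exact Nnorm_monom_le_exp β
  | succ m ih =>
      intro hm
      have hm' : m ≤ l := by omega
      have hstep := Nnorm_pb_Hcl_le V (θ := ((l : ℝ) - (m+1)) / l) (δ := 1 / l)
        (by
          apply div_nonneg _ hl0.le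
          have : ((m:ℝ) + 1) ≤ l := by exact_mod_cast hm
          push_cast
          linarith)
        (by positivity)
        (by
          rw [← add_div, div_le_one hl0]
          push_cast
          linarith)
        (pbIter (Hcl V) m (monom β))
      rw [pbIter_succ]
      have hθδ : ((l : ℝ) - (m+1)) / l + 1 / l = ((l : ℝ) - m) / l := by
        rw [← add_div]
        push_cast
        ring_nf
      rw [hθδ] at hstep
      have hfac : Vnorm (fun α => V α) / (Real.exp 1 * Real.exp 1 * (1 / l))
          = Vnorm (fun α => V α) * l / (Real.exp 1 * Real.exp 1) := by
        field_simp
      rw [hfac] at hstep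
      have hpos : 0 ≤ Vnorm (fun α => V α) * l / (Real.exp 1 * Real.exp 1) := by
        have := Vnorm_nonneg V
        positivity
      have hcast : ((l : ℝ) - ((m:ℕ)+1:ℕ)) / l = ((l : ℝ) - ((m:ℝ)+1)) / l := by
        push_cast; ring_nf
      rw [hcast]
      calc Nnorm (((l : ℝ) - ((m:ℝ)+1)) / l) (pb (Hcl V) (pbIter (Hcl V) m (monom β)))
          ≤ Vnorm (fun α => V α) * l / (Real.exp 1 * Real.exp 1) *
              Nnorm (((l : ℝ) - m) / l) (pbIter (Hcl V) m (monom β)) := hstep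
        _ ≤ Vnorm (fun α => V α) * l / (Real.exp 1 * Real.exp 1) *
              ((Vnorm (fun α => V α) * l / (Real.exp 1 * Real.exp 1)) ^ m *
                Real.exp (deg β)) :=
            mul_le_mul_of_nonneg_left (ih hm') hpos
        _ = (Vnorm (fun α => V α) * l / (Real.exp 1 * Real.exp 1)) ^ (m+1) *
              Real.exp (deg β) := by rw [pow_succ]; ring

lemma Nnorm_zero_pbIter_le (V : ((Idx × Λ) →₀ ℕ) →₀ ℂ) (β : (Idx × Λ) →₀ ℕ) (l : ℕ) :
    Nnorm 0 (pbIter (Hcl V) l (monom β))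
      ≤ (Vnorm (fun α => V α) * l / (Real.exp 1 * Real.exp 1)) ^ l * Real.exp (deg β) := by
  cases l with
  | zero =>
      rw [pow_zero, one_mul]
      show Nnorm 0 (monom β) ≤ Real.exp (deg β)
      refine (Nnorm_monomial_le 0 β 1).trans ?_
      rw [norm_one, one_mul, zero_mul, Real.exp_zero]
      exact Real.one_le_exp (by positivity)
  | succ m =>
      have h := Nnorm_pbIter_le V β (m+1) (by omega) (m+1) le_rfl
      have hθ : (((m+1 : ℕ) : ℝ) - ((m+1 : ℕ) : ℝ)) / ((m+1 : ℕ) : ℝ) = 0 := by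
        rw [sub_self, zero_div]
      rwa [hθ] at h

lemma supNorm_pbIter_le (V : ((Idx × Λ) →₀ ℕ) →₀ ℂ) (β : (Idx × Λ) →₀ ℕ) (l : ℕ) :
    supNorm (pbIter (Hcl V) l (monom β))
      ≤ (Vnorm (fun α => V α) * l / (Real.exp 1 * Real.exp 1)) ^ l * Real.exp (deg β) :=
  (supNorm_le_Nnorm _).trans (Nnorm_zero_pbIter_le V β l)

end Iteration

section Factorial

lemma pow_le_exp_mul_factorial (l : ℕ) :
    (l : ℝ) ^ l ≤ Real.exp 1 ^ l * l.factorial := by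
  induction l with
  | zero => simp
  | succ m ih =>
      have key : ((m:ℝ) + 1) ^ m ≤ Real.exp 1 * (m:ℝ) ^ m := by
        rcases Nat.eq_zero_or_pos m with hm | hm
        · subst hm
          simpa using Real.one_le_exp (by norm_num : (0:ℝ) ≤ 1)
        · have hm0 : (0:ℝ) < m := by exact_mod_cast hm
          have h1 : 1 + 1 / (m:ℝ) ≤ Real.exp (1 / m) := by
            have := Real.add_one_le_exp (1 / (m:ℝ))
            linarith
          have h2 : (1 + 1 / (m:ℝ)) ^ m ≤ Real.exp (1 / m) ^ m :=
            pow_le_pow_left₀ (by positivity) h1 m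
          have h3 : Real.exp (1 / (m:ℝ)) ^ m = Real.exp 1 := by
            rw [← Real.exp_nat_mul]
            congr 1
            field_simp
          have h4 : ((m:ℝ) + 1) ^ m = (m:ℝ) ^ m * (1 + 1 / (m:ℝ)) ^ m := by
            rw [← mul_pow]
            congr 1
            field_simp
          rw [h4]
          calc (m:ℝ) ^ m * (1 + 1 / (m:ℝ)) ^ m
              ≤ (m:ℝ) ^ m * Real.exp 1 := by
                refine mul_le_mul_of_nonneg_left ?_ (by positivity)
                rw [← h3]; exact h2
            _ = Real.exp 1 * (m:ℝ) ^ m := by ring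
      have hcast : ((m + 1 : ℕ) : ℝ) = (m : ℝ) + 1 := by push_cast; ring
      rw [hcast, pow_succ ((m:ℝ) + 1) m]
      calc ((m:ℝ) + 1) ^ m * ((m:ℝ) + 1)
          ≤ (Real.exp 1 * (m:ℝ) ^ m) * ((m:ℝ) + 1) :=
            mul_le_mul_of_nonneg_right key (by positivity)
        _ ≤ (Real.exp 1 * (Real.exp 1 ^ m * m.factorial)) * ((m:ℝ) + 1) := by
            refine mul_le_mul_of_nonneg_right
              (mul_le_mul_of_nonneg_left ih (Real.exp_pos 1).le) (by positivity)
        _ = Real.exp 1 ^ (m+1) * ((m.factorial : ℝ) * ((m:ℝ) + 1)) := by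
            rw [pow_succ]; ring
        _ = Real.exp 1 ^ (m+1) * ((m+1).factorial : ℝ) := by
            congr 1
            rw [Nat.factorial_succ]
            push_cast
            ring

lemma term_bound {v T dβ : ℝ} (hv : 0 ≤ v) (hT : 0 ≤ T) (l : ℕ) :
    T ^ l / l.factorial * ((v * l / (Real.exp 1 * Real.exp 1)) ^ l * Real.exp dβ)
      ≤ Real.exp dβ * (T * v / Real.exp 1) ^ l := by
  have hfac : (0:ℝ) < l.factorial := by exact_mod_cast l.factorial_pos
  have hE : (0:ℝ) < Real.exp 1 := Real.exp_pos 1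
  have hl : (l:ℝ) ^ l ≤ Real.exp 1 ^ l * l.factorial := pow_le_exp_mul_factorial l
  have hfrac : (l:ℝ) ^ l / (Real.exp 1 ^ l * l.factorial) ≤ 1 := by
    rw [div_le_one (by positivity)]
    exact hl
  have heq : T ^ l / l.factorial * ((v * l / (Real.exp 1 * Real.exp 1)) ^ l * Real.exp dβ)
      = (Real.exp dβ * (T * v / Real.exp 1) ^ l) *
          ((l:ℝ) ^ l / (Real.exp 1 ^ l * l.factorial)) := by
    rw [div_pow, div_pow, mul_pow, mul_pow]
    field_simp
    ring
  rw [heq]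
  exact mul_le_of_le_one_right (by positivity) hfrac

end Factorial

section TaylorSetup

open MvPolynomial Set

variable {Λ : Type} [Fintype Λ] [DecidableEq Λ] [Nonempty Λ]

/-- The rescaled observable `σ^l {H,A}^{(l)}(M(στ))` along the flow. -/
noncomputable def glfun (V : ((Idx × Λ) →₀ ℕ) →₀ ℂ) (M : ℝ → Λ → Fin 3 → ℝ) (σ : ℝ)
    (β : (Idx × Λ) →₀ ℕ) (l : ℕ) (τ : ℝ) : ℂ :=
  ((σ : ℂ)) ^ l * evalAt (M (σ * τ)) (pbIter (Hcl V) l (monom β))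

variable (V : ((Idx × Λ) →₀ ℕ) →₀ ℂ) (M : ℝ → Λ → Fin 3 → ℝ) (σ : ℝ)
    (β : (Idx × Λ) →₀ ℕ)
variable (hODE : ∀ (i : Idx) (x : Λ) (τ : ℝ),
      HasDerivAt (fun τ' => coord i (M τ' x))
        (evalAt (M τ) (pb (Hcl V) (MvPolynomial.X (i, x)))) τ)

include hODE in
lemma glfun_hasDerivAt (l : ℕ) (τ : ℝ) :
    HasDerivAt (glfun V M σ β l) (glfun V M σ β (l+1) τ) τ := by
  have base := hasDerivAt_evalAt V M hODE (pbIter (Hcl V) l (monom β)) (σ * τ)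
  have hlin : HasDerivAt (fun τ' : ℝ => σ * τ') σ τ := by
    simpa using (hasDerivAt_id τ).const_mul σ
  have comp : HasDerivAt (fun τ' => evalAt (M (σ * τ')) (pbIter (Hcl V) l (monom β)))
      (σ • evalAt (M (σ * τ)) (pb (Hcl V) (pbIter (Hcl V) l (monom β)))) τ :=
    base.scomp τ hlin
  have hm := comp.const_mul (((σ : ℂ)) ^ l)
  refine hm.congr_deriv ?_
  unfold glfun
  rw [← pbIter_succ, Complex.real_smul, pow_succ]
  ring

include hODE in
lemma glfun_contDiff : ∀ (m : ℕ) (l : ℕ), ContDiff ℝ m (glfun V M σ β l) := by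
  intro m
  induction m with
  | zero =>
      intro l
      rw [show ((0:ℕ) : WithTop ℕ∞) = 0 from rfl, contDiff_zero]
      exact continuous_iff_continuousAt.mpr fun τ =>
        (glfun_hasDerivAt V M σ β hODE l τ).differentiableAt.continuousAt
  | succ k ih =>
      intro l
      have hcast : ((k + 1 : ℕ) : WithTop ℕ∞) = (k : WithTop ℕ∞) + 1 := by
        push_cast; rfl
      rw [hcast, contDiff_succ_iff_deriv]
      refine ⟨fun τ => (glfun_hasDerivAt V M σ β hODE l τ).differentiableAt, ?_, ?_⟩
      · intro h
        exact absurd h (by exact_mod_cast WithTop.natCast_ne_top k)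
      · have hde : deriv (glfun V M σ β l) = glfun V M σ β (l+1) :=
          funext fun τ => (glfun_hasDerivAt V M σ β hODE l τ).deriv
        rw [hde]
        exact ih (l+1)

include hODE in
lemma glfun_iteratedDerivWithin {T : ℝ} (hT : 0 < T) :
    ∀ l, ∀ τ ∈ Icc (0:ℝ) T,
      iteratedDerivWithin l (glfun V M σ β 0) (Icc 0 T) τ = glfun V M σ β l τ := by
  intro l
  induction l with
  | zero => intro τ _; rw [iteratedDerivWithin_zero]
  | succ k ih =>
      intro τ hτ
      rw [iteratedDerivWithin_succ]
      have hcongr : derivWithin (iteratedDerivWithin k (glfun V M σ β 0) (Icc 0 T)) (Icc 0 T) τ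
          = derivWithin (glfun V M σ β k) (Icc 0 T) τ :=
        derivWithin_congr (fun y hy => ih y hy) (ih τ hτ)
      rw [hcongr]
      exact ((glfun_hasDerivAt V M σ β hODE k τ).hasDerivWithinAt).derivWithin
        ((uniqueDiffOn_Icc hT) τ hτ)

end TaylorSetup


lemma pbIter_zero {Λ : Type} [Fintype Λ] [DecidableEq Λ] (H A : MvPolynomial (Idx × Λ) ℂ) :
    pbIter H 0 A = A := rfl




/-- **Convergence of the Lie–Schwinger series to the flow.**
For `|t| < ‖V‖⁻¹` the series `Σ_{l≥0} (t^l/l!) {H_Λ, A}^{(l)}` converges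
absolutely in the sup-norm on `Ξ_Λ` for the polynomial observable `A = M^β`,
and its sum equals `A ∘ φ^t_Λ`: evaluated at any initial condition `M(0) ∈ Ξ_Λ`
of a solution `M` of the Hamiltonian equations of motion, the sum of the series
is `A(M(t))`. -/
theorem lie_schwinger_series_converges_to_flow {Λ : Type} [Fintype Λ] [DecidableEq Λ]
    [Nonempty Λ]
    (V : ((Idx × Λ) →₀ ℕ) →₀ ℂ) (β : (Idx × Λ) →₀ ℕ)
    (t : ℝ) (ht : |t| < (Vnorm fun α => V α)⁻¹)
    (M : ℝ → Λ → Fin 3 → ℝ) (hM0 : inBall (M 0))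
    (hODE : ∀ (i : Idx) (x : Λ) (τ : ℝ),
      HasDerivAt (fun τ' => coord i (M τ' x))
        (evalAt (M τ) (pb (Hcl V) (MvPolynomial.X (i, x)))) τ) :
    Summable (fun l : ℕ =>
        |t| ^ l / (l.factorial : ℝ) * supNorm (pbIter (Hcl V) l (monom β))) ∧
    HasSum (fun l : ℕ =>
        ((t : ℂ) ^ l / (l.factorial : ℂ)) * evalAt (M 0) (pbIter (Hcl V) l (monom β)))
      (evalAt (M t) (monom β)) := by
  classical
  have hVnn : 0 ≤ Vnorm (fun α => V α) := Vnorm_nonneg V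
  have htV : |t| * Vnorm (fun α => V α) < 1 := by
    rcases eq_or_lt_of_le hVnn with h0 | hpos
    · rw [← h0, mul_zero]; norm_num
    · calc |t| * Vnorm (fun α => V α)
          < (Vnorm fun α => V α)⁻¹ * Vnorm (fun α => V α) :=
            mul_lt_mul_of_pos_right ht hpos
        _ = 1 := inv_mul_cancel₀ hpos.ne'
  set r : ℝ := |t| * Vnorm (fun α => V α) / Real.exp 1 with hr
  have hE1 : (1:ℝ) ≤ Real.exp 1 := Real.one_le_exp zero_le_one
  have hr0 : 0 ≤ r := by
    rw [hr]; positivity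
  have hr1 : r < 1 := by
    rw [hr]
    exact lt_of_le_of_lt (div_le_self (by positivity) hE1) htV
  have hb : ∀ l : ℕ, |t| ^ l / l.factorial * supNorm (pbIter (Hcl V) l (monom β))
      ≤ Real.exp (deg β) * r ^ l := by
    intro l
    have h1 : |t| ^ l / l.factorial * supNorm (pbIter (Hcl V) l (monom β))
        ≤ |t| ^ l / l.factorial *
          ((Vnorm (fun α => V α) * l / (Real.exp 1 * Real.exp 1)) ^ l * Real.exp (deg β)) :=
      mul_le_mul_of_nonneg_left (supNorm_pbIter_le V β l) (by positivity)
    exact h1.trans (term_bound hVnn (abs_nonneg t) l)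
  have hnn : ∀ l : ℕ, 0 ≤ |t| ^ l / l.factorial * supNorm (pbIter (Hcl V) l (monom β)) :=
    fun l => mul_nonneg (by positivity) (supNorm_nonneg _)
  have hgeom : Summable (fun l : ℕ => Real.exp (deg β) * r ^ l) :=
    (summable_geometric_of_lt_one hr0 hr1).mul_left _
  have hRsum : Summable (fun l : ℕ =>
      |t| ^ l / (l.factorial : ℝ) * supNorm (pbIter (Hcl V) l (monom β))) :=
    Summable.of_nonneg_of_le hnn hb hgeom
  refine ⟨hRsum, ?_⟩
  set f : ℕ → ℂ := fun l =>
    ((t : ℂ) ^ l / (l.factorial : ℂ)) * evalAt (M 0) (pbIter (Hcl V) l (monom β)) with hf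
  have hball : ∀ τ : ℝ, inBall (M τ) := inBall_forever V M hODE hM0 
  have hfnorm : ∀ l, ‖f l‖ ≤ |t| ^ l / l.factorial * supNorm (pbIter (Hcl V) l (monom β)) := by
    intro l
    rw [hf]
    simp only
    rw [norm_mul, norm_div, norm_pow, Complex.norm_real, Real.norm_eq_abs,
      Complex.norm_natCast]
    exact mul_le_mul_of_nonneg_left (norm_evalAt_le_supNorm (hball 0) _) (by positivity)
  have hfsumnorm : Summable (fun l => ‖f l‖) :=
    Summable.of_nonneg_of_le (fun l => norm_nonneg _) hfnorm hRsum
  rw [hasSum_iff_tendsto_nat_of_summable_norm hfsumnorm]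
  by_cases ht0 : t = 0
  · subst ht0
    have hfl : ∀ l : ℕ, l ≠ 0 → f l = 0 := by
      intro l hl
      rw [hf]
      simp [zero_pow hl]
    have hf0 : f 0 = evalAt (M 0) (monom β) := by
      rw [hf]; simp [pbIter_zero]
    have hps : ∀ n : ℕ, 1 ≤ n → ∑ i ∈ Finset.range n, f i = f 0 := by
      intro n hn
      refine Finset.sum_eq_single 0 (fun b _ hb => hfl b hb)
        (fun h => absurd (Finset.mem_range.mpr (by omega)) h)
    refine Filter.Tendsto.congr' ?_ tendsto_const_nhds
    refine Filter.eventually_atTop.mpr ⟨1, fun n hn => ?_⟩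
    show evalAt (M 0) (monom β) = ∑ i ∈ Finset.range n, f i
    rw [hps n hn, hf0]
  -- main case `t ≠ 0`
  set T : ℝ := |t| with hT
  have hT0 : 0 < T := abs_pos.mpr ht0
  set σ : ℝ := if 0 ≤ t then 1 else -1 with hσ
  have hσT : σ * T = t := by
    rw [hσ, hT]
    rcases le_or_gt 0 t with h | h
    · rw [if_pos h, one_mul, abs_of_nonneg h]
    · rw [if_neg (not_le.mpr h), abs_of_neg h]; ring
  have hσn : ‖(σ:ℂ)‖ = 1 := by
    rw [hσ]; split_ifs <;> simp
  have hiter := glfun_iteratedDerivWithin V M σ β hODE hT0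
  have hbound : ∀ n : ℕ, ∀ y ∈ Set.Icc (0:ℝ) T,
      ‖iteratedDerivWithin (n+1) (glfun V M σ β 0) (Set.Icc 0 T) y‖
        ≤ (Vnorm (fun α => V α) * (n+1 : ℕ) / (Real.exp 1 * Real.exp 1)) ^ (n+1) *
            Real.exp (deg β) := by
    intro n y hy
    rw [hiter (n+1) y hy]
    rw [show glfun V M σ β (n+1) y
        = ((σ:ℂ)) ^ (n+1) * evalAt (M (σ * y)) (pbIter (Hcl V) (n+1) (monom β)) from rfl]
    rw [norm_mul, norm_pow, hσn, one_pow, one_mul]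
    exact (norm_evalAt_le_supNorm (hball (σ * y)) _).trans (supNorm_pbIter_le V β (n+1))
  have hrem : ∀ n : ℕ,
      ‖glfun V M σ β 0 T - taylorWithinEval (glfun V M σ β 0) n (Set.Icc 0 T) 0 T‖
        ≤ ((Vnorm (fun α => V α) * (n+1 : ℕ) / (Real.exp 1 * Real.exp 1)) ^ (n+1) *
            Real.exp (deg β)) * (T - 0) ^ (n+1) / n.factorial := by
    intro n
    exact taylor_mean_remainder_bound hT0.le
      ((glfun_contDiff V M σ β hODE (n+1) 0).contDiffOn)
      ⟨hT0.le, le_rfl⟩ (hbound n)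
  have htay : ∀ n : ℕ, taylorWithinEval (glfun V M σ β 0) n (Set.Icc 0 T) 0 T
      = ∑ k ∈ Finset.range (n+1), f k := by
    intro n
    rw [taylor_within_apply]
    refine Finset.sum_congr rfl fun k _ => ?_
    rw [hiter k 0 ⟨le_rfl, hT0.le⟩, hf]
    simp only
    rw [show glfun V M σ β k 0
        = ((σ:ℂ)) ^ k * evalAt (M (σ * 0)) (pbIter (Hcl V) k (monom β)) from rfl]
    rw [mul_zero, sub_zero, Complex.real_smul, ← hσT]
    push_cast
    ring
  have hval : glfun V M σ β 0 T = evalAt (M t) (monom β) := by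
    rw [show glfun V M σ β 0 T
        = ((σ:ℂ)) ^ 0 * evalAt (M (σ * T)) (pbIter (Hcl V) 0 (monom β)) from rfl]
    rw [pow_zero, one_mul, hσT, pbIter_zero]
  have hc : ∀ n : ℕ,
      ((Vnorm (fun α => V α) * (n+1 : ℕ) / (Real.exp 1 * Real.exp 1)) ^ (n+1) *
          Real.exp (deg β)) * (T - 0) ^ (n+1) / n.factorial
        ≤ ((n:ℝ)+1) * (Real.exp (deg β) * r ^ (n+1)) := by
    intro n
    have h1 := term_bound (v := Vnorm (fun α => V α)) (T := T) (dβ := (deg β : ℝ))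
      hVnn hT0.le (n+1)
    have heq : ((Vnorm (fun α => V α) * (n+1 : ℕ) / (Real.exp 1 * Real.exp 1)) ^ (n+1) *
          Real.exp (deg β)) * (T - 0) ^ (n+1) / n.factorial
        = ((n:ℝ)+1) * (T ^ (n+1) / (n+1).factorial *
            ((Vnorm (fun α => V α) * (n+1 : ℕ) / (Real.exp 1 * Real.exp 1)) ^ (n+1) *
              Real.exp (deg β))) := by
      rw [sub_zero, Nat.factorial_succ]
      have hfn : (0:ℝ) < n.factorial := by exact_mod_cast n.factorial_pos
      push_cast
      field_simp
    rw [heq]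
    refine mul_le_mul_of_nonneg_left ?_ (by positivity)
    have : r = T * Vnorm (fun α => V α) / Real.exp 1 := by simp only [hr, hT]
    rw [this]
    exact h1
  have hc0 : Filter.Tendsto (fun n : ℕ => ((n:ℝ)+1) * (Real.exp (deg β) * r ^ (n+1)))
      Filter.atTop (nhds 0) := by
    have hgeo : Summable (fun n : ℕ => (n:ℝ)^1 * r ^ n) :=
      summable_pow_mul_geometric_of_norm_lt_one 1
        (by rwa [Real.norm_eq_abs, abs_of_nonneg hr0])
    have hshift : Summable (fun n : ℕ => ((n+1:ℕ):ℝ)^1 * r ^ (n+1)) := by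
      exact_mod_cast (summable_nat_add_iff 1).mpr hgeo
    have hs : Summable (fun n : ℕ => ((n:ℝ)+1) * (Real.exp (deg β) * r ^ (n+1))) := by
      refine (hshift.mul_left (Real.exp (deg β))).congr fun n => ?_
      push_cast
      ring
    exact hs.tendsto_atTop_zero
  have hremto : Filter.Tendsto
      (fun n : ℕ => ‖(∑ k ∈ Finset.range (n+1), f k) - evalAt (M t) (monom β)‖)
      Filter.atTop (nhds 0) := by
    refine squeeze_zero (fun n => norm_nonneg _) (fun n => ?_) hc0
    rw [norm_sub_rev, ← hval, ← htay n]
    exact (hrem n).trans (hc n)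
  have htendsto : Filter.Tendsto (fun n : ℕ => ∑ k ∈ Finset.range (n+1), f k)
      Filter.atTop (nhds (evalAt (M t) (monom β))) := by
    rw [tendsto_iff_norm_sub_tendsto_zero]
    exact hremto
  exact (Filter.tendsto_add_atTop_iff_nat 1).mp htendsto
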